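/- Anticommutativity of boundary maps around a 3×3 diagram: Let F_0 and F_1 be additive, homotopy invariant, half-exact covariant functors from C*-algebras to abelian groups, equipped with boundary homomorphisms ∂_0^e : F_0(A2) → F_1(A0) and ∂_1^e : F_1(A2) → F_0(A0) for every short exact sequence e : A0 ↪ A1 ↠ A2, such that (a) the cyclic six-term sequence F_0(A0) → F_0(A1) → F_0(A2) →∂_0^e F_1(A0) → F_1(A1) → F_1(A2) →∂_1^e F_0(A0) is exact at every spot, and (b) the ∂_j are natural: for every morphism (φ0, φ1, φ2) of short exact sequences from e to e′, one has ∂_j^{e′} ∘ F_j(φ2) = F_{1-j}(φ0) ∘ ∂_j^e for j = 0,1. Given a 3×3 commuting diagram of C*-algebras with exact rows e_A : A0 ↪ A1 ↠ A2, e_B : B0 ↪ B1 ↠ B2, e_C : C0 ↪ C1 ↠ C2 and exact columns e_i : A_i ↪ B_i ↠ C_i (i = 0,1,2), the two corner squares anticommute: for j = 0 and j = 1, ∂_{1-j}^{e_A} ∘ ∂_j^{e_2} = − ∂_{1-j}^{e_0} ∘ ∂_j^{e_C} as homomorphisms F_j(C2) → F_{1-j}(A0). -/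
import Mathlib


/-!
Formalization preamble: cones, suspensions, mapping cones of (non-unital) C*-algebras,
their concrete models inside algebras of continuous functions, and functors from
C*-algebras to abelian groups.
-/

set_option maxHeartbeats 1600000
set_option synthInstance.maxHeartbeats 800000

open scoped unitInterval CStarAlgebra

noncomputable section

namespace CStarPaper

variable {A B : Type*} [NonUnitalCStarAlgebra A] [NonUnitalCStarAlgebra B]

/-- The flip of a continuous function on the square `[0,1]²`. -/
def flip2 {A : Type*} [NonUnitalCStarAlgebra A] (f : C(I × I, A)) : C(I × I, A) :=
  f.comp ⟨Prod.swap, continuous_swap⟩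

@[simp] lemma flip2_apply (f : C(I × I, A)) (s t : I) : flip2 f (s, t) = f (t, s) := rfl

/-- The cone `CA = {f ∈ C([0,1],A) : f(0) = 0}` of a C*-algebra `A`. -/
def cone (A : Type*) [NonUnitalCStarAlgebra A] : NonUnitalStarSubalgebra ℂ C(I, A) where
  carrier := {f | f 0 = 0}
  add_mem' := by intro f g hf hg; simp_all [Set.mem_setOf_eq]
  zero_mem' := by simp [Set.mem_setOf_eq]
  mul_mem' := by intro f g hf hg; simp_all [Set.mem_setOf_eq]
  smul_mem' := by intro c f hf; simp_all [Set.mem_setOf_eq]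
  star_mem' := by intro f hf; simp_all [Set.mem_setOf_eq, map_star]

instance cone.isClosed (A : Type*) [NonUnitalCStarAlgebra A] :
    IsClosed ((cone A : Set C(I, A))) :=
  isClosed_eq (continuous_eval_const 0) continuous_const

/-- The suspension `SA = {f ∈ C([0,1],A) : f(0) = f(1) = 0}` of a C*-algebra `A`. -/
def susp (A : Type*) [NonUnitalCStarAlgebra A] : NonUnitalStarSubalgebra ℂ C(I, A) where
  carrier := {f | f 0 = 0 ∧ f 1 = 0}
  add_mem' := by intro f g hf hg; simp_all [Set.mem_setOf_eq]
  zero_mem' := by simp [Set.mem_setOf_eq]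
  mul_mem' := by intro f g hf hg; simp_all [Set.mem_setOf_eq]
  smul_mem' := by intro c f hf; simp_all [Set.mem_setOf_eq]
  star_mem' := by intro f hf; simp_all [Set.mem_setOf_eq, map_star]

instance susp.isClosed (A : Type*) [NonUnitalCStarAlgebra A] :
    IsClosed ((susp A : Set C(I, A))) := by
  have h : (susp A : Set C(I, A)) = {f | f 0 = 0} ∩ {f | f 1 = 0} := rfl
  rw [h]
  exact (isClosed_eq (continuous_eval_const 0) continuous_const).inter
    (isClosed_eq (continuous_eval_const 1) continuous_const)

/-- The mapping cone `C_φ = {(x,y) ∈ A ⊕ CB : φ(x) = y(1)}` of `φ : A → B`. -/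
def mapCone (φ : A →⋆ₙₐ[ℂ] B) : NonUnitalStarSubalgebra ℂ (A × C(I, B)) where
  carrier := {p | p.2 0 = 0 ∧ φ p.1 = p.2 1}
  add_mem' := by intro p q hp hq; simp_all [Set.mem_setOf_eq]
  zero_mem' := by simp [Set.mem_setOf_eq]
  mul_mem' := by intro p q hp hq; simp_all [Set.mem_setOf_eq]
  smul_mem' := by intro c p hp; simp_all [Set.mem_setOf_eq]
  star_mem' := by intro p hp; simp_all [Set.mem_setOf_eq, map_star]

instance mapCone.isClosed (φ : A →⋆ₙₐ[ℂ] B) :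
    IsClosed ((mapCone φ : Set (A × C(I, B)))) := by
  have h : (mapCone φ : Set (A × C(I, B)))
      = {p : A × C(I, B) | p.2 0 = 0} ∩ {p : A × C(I, B) | φ p.1 = p.2 1} := rfl
  rw [h]
  exact (isClosed_eq ((continuous_eval_const 0).comp continuous_snd) continuous_const).inter
    (isClosed_eq ((map_continuous φ).comp continuous_fst)
      ((continuous_eval_const 1).comp continuous_snd))

/-- The canonical inclusion `SA → CA`. -/
def suspIncl (A : Type*) [NonUnitalCStarAlgebra A] : ↥(susp A) →⋆ₙₐ[ℂ] ↥(cone A) where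
  toFun f := ⟨(f : C(I, A)), f.2.1⟩
  map_smul' _ _ := rfl
  map_zero' := rfl
  map_add' _ _ := rfl
  map_mul' _ _ := rfl
  map_star' _ := rfl

/-- Evaluation at `1`, as a *-homomorphism `CA → A`. -/
def coneEval (A : Type*) [NonUnitalCStarAlgebra A] : ↥(cone A) →⋆ₙₐ[ℂ] A where
  toFun f := (f : C(I, A)) 1
  map_smul' _ _ := rfl
  map_zero' := rfl
  map_add' _ _ := rfl
  map_mul' _ _ := rfl
  map_star' _ := rfl

/-- The canonical projection `π_mc : C_φ → A`, `(x,y) ↦ x`. -/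
def mapConeProj (φ : A →⋆ₙₐ[ℂ] B) : ↥(mapCone φ) →⋆ₙₐ[ℂ] A where
  toFun p := (p : A × C(I, B)).1
  map_smul' _ _ := rfl
  map_zero' := rfl
  map_add' _ _ := rfl
  map_mul' _ _ := rfl
  map_star' _ := rfl

/-- The projection `C_φ → CB`, `(x,y) ↦ y`. -/
def mapConeSnd (φ : A →⋆ₙₐ[ℂ] B) : ↥(mapCone φ) →⋆ₙₐ[ℂ] ↥(cone B) where
  toFun p := ⟨(p : A × C(I, B)).2, p.2.1⟩
  map_smul' _ _ := rfl
  map_zero' := rfl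
  map_add' _ _ := rfl
  map_mul' _ _ := rfl
  map_star' _ := rfl

/-- The canonical inclusion `ι_mc : SB → C_φ`, `g ↦ (0,g)`. -/
def mapConeIncl (φ : A →⋆ₙₐ[ℂ] B) : ↥(susp B) →⋆ₙₐ[ℂ] ↥(mapCone φ) where
  toFun g := ⟨(0, (g : C(I, B))), ⟨g.2.1, by simp [g.2.2]⟩⟩
  map_smul' c g := Subtype.ext (by simp [Prod.ext_iff])
  map_zero' := Subtype.ext (by simp [Prod.ext_iff])
  map_add' g h := Subtype.ext (by simp [Prod.ext_iff])
  map_mul' g h := Subtype.ext (by simp [Prod.ext_iff])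
  map_star' g := Subtype.ext (by simp [Prod.ext_iff])

/-- The concrete model of the suspension `S(C_φ)` of a mapping cone, inside
`C([0,1],A) × C([0,1]²,B)`. -/
def suspMapConeModel (φ : A →⋆ₙₐ[ℂ] B) :
    NonUnitalStarSubalgebra ℂ (C(I, A) × C(I × I, B)) where
  carrier := {p | p.1 0 = 0 ∧ p.1 1 = 0 ∧ (∀ t, p.2 (0, t) = 0) ∧ (∀ t, p.2 (1, t) = 0) ∧
    (∀ s, p.2 (s, 0) = 0) ∧ ∀ s, φ (p.1 s) = p.2 (s, 1)}
  add_mem' := by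
    rintro p q ⟨h1, h2, h3, h4, h5, h6⟩ ⟨g1, g2, g3, g4, g5, g6⟩
    exact ⟨by simp [h1, g1], by simp [h2, g2], fun t => by simp [h3 t, g3 t],
      fun t => by simp [h4 t, g4 t], fun s => by simp [h5 s, g5 s],
      fun s => by simp [h6 s, g6 s]⟩
  zero_mem' := ⟨by simp, by simp, fun t => by simp, fun t => by simp, fun s => by simp,
    fun s => by simp⟩
  mul_mem' := by
    rintro p q ⟨h1, h2, h3, h4, h5, h6⟩ ⟨g1, g2, g3, g4, g5, g6⟩
    exact ⟨by simp [h1, g1], by simp [h2, g2], fun t => by simp [h3 t, g3 t],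
      fun t => by simp [h4 t, g4 t], fun s => by simp [h5 s, g5 s],
      fun s => by simp [h6 s, g6 s]⟩
  smul_mem' := by
    rintro c p ⟨h1, h2, h3, h4, h5, h6⟩
    exact ⟨by simp [h1], by simp [h2], fun t => by simp [h3 t],
      fun t => by simp [h4 t], fun s => by simp [h5 s], fun s => by simp [h6 s]⟩
  star_mem' := by
    rintro p ⟨h1, h2, h3, h4, h5, h6⟩
    exact ⟨by simp [h1], by simp [h2], fun t => by simp [h3 t],
      fun t => by simp [h4 t], fun s => by simp [h5 s], fun s => by simp [map_star, h6 s]⟩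

/-- The concrete model of the mapping cone `C_{Sφ}` of the suspension of `φ`, inside
`C([0,1],A) × C([0,1]²,B)`. -/
def mapConeSuspModel (φ : A →⋆ₙₐ[ℂ] B) :
    NonUnitalStarSubalgebra ℂ (C(I, A) × C(I × I, B)) where
  carrier := {p | p.1 0 = 0 ∧ p.1 1 = 0 ∧ (∀ t, p.2 (0, t) = 0) ∧ (∀ s, p.2 (s, 0) = 0) ∧
    (∀ s, p.2 (s, 1) = 0) ∧ ∀ t, φ (p.1 t) = p.2 (1, t)}
  add_mem' := by
    rintro p q ⟨h1, h2, h3, h4, h5, h6⟩ ⟨g1, g2, g3, g4, g5, g6⟩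
    exact ⟨by simp [h1, g1], by simp [h2, g2], fun t => by simp [h3 t, g3 t],
      fun s => by simp [h4 s, g4 s], fun s => by simp [h5 s, g5 s],
      fun t => by simp [h6 t, g6 t]⟩
  zero_mem' := ⟨by simp, by simp, fun t => by simp, fun s => by simp, fun s => by simp,
    fun t => by simp⟩
  mul_mem' := by
    rintro p q ⟨h1, h2, h3, h4, h5, h6⟩ ⟨g1, g2, g3, g4, g5, g6⟩
    exact ⟨by simp [h1, g1], by simp [h2, g2], fun t => by simp [h3 t, g3 t],
      fun s => by simp [h4 s, g4 s], fun s => by simp [h5 s, g5 s],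
      fun t => by simp [h6 t, g6 t]⟩
  smul_mem' := by
    rintro c p ⟨h1, h2, h3, h4, h5, h6⟩
    exact ⟨by simp [h1], by simp [h2], fun t => by simp [h3 t],
      fun s => by simp [h4 s], fun s => by simp [h5 s], fun t => by simp [h6 t]⟩
  star_mem' := by
    rintro p ⟨h1, h2, h3, h4, h5, h6⟩
    exact ⟨by simp [h1], by simp [h2], fun t => by simp [h3 t],
      fun s => by simp [h4 s], fun s => by simp [h5 s], fun t => by simp [map_star, h6 t]⟩

/-- The concrete model of the cone `C(C_φ)` of a mapping cone, inside
`C([0,1],A) × C([0,1]²,B)`. -/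
def coneMapConeModel (φ : A →⋆ₙₐ[ℂ] B) :
    NonUnitalStarSubalgebra ℂ (C(I, A) × C(I × I, B)) where
  carrier := {p | p.1 0 = 0 ∧ (∀ t, p.2 (0, t) = 0) ∧ (∀ s, p.2 (s, 0) = 0) ∧
    ∀ s, φ (p.1 s) = p.2 (s, 1)}
  add_mem' := by
    rintro p q ⟨h1, h3, h5, h6⟩ ⟨g1, g3, g5, g6⟩
    exact ⟨by simp [h1, g1], fun t => by simp [h3 t, g3 t], fun s => by simp [h5 s, g5 s],
      fun s => by simp [h6 s, g6 s]⟩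
  zero_mem' := ⟨by simp, fun t => by simp, fun s => by simp, fun s => by simp⟩
  mul_mem' := by
    rintro p q ⟨h1, h3, h5, h6⟩ ⟨g1, g3, g5, g6⟩
    exact ⟨by simp [h1, g1], fun t => by simp [h3 t, g3 t], fun s => by simp [h5 s, g5 s],
      fun s => by simp [h6 s, g6 s]⟩
  smul_mem' := by
    rintro c p ⟨h1, h3, h5, h6⟩
    exact ⟨by simp [h1], fun t => by simp [h3 t], fun s => by simp [h5 s],
      fun s => by simp [h6 s]⟩
  star_mem' := by
    rintro p ⟨h1, h3, h5, h6⟩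
    exact ⟨by simp [h1], fun t => by simp [h3 t], fun s => by simp [h5 s],
      fun s => by simp [map_star, h6 s]⟩

/-- The concrete model of the mapping cone `C_{Cφ}` of the cone of `φ`, inside
`C([0,1],A) × C([0,1]²,B)`. -/
def mapConeConeModel (φ : A →⋆ₙₐ[ℂ] B) :
    NonUnitalStarSubalgebra ℂ (C(I, A) × C(I × I, B)) where
  carrier := {p | p.1 0 = 0 ∧ (∀ t, p.2 (0, t) = 0) ∧ (∀ s, p.2 (s, 0) = 0) ∧
    ∀ t, φ (p.1 t) = p.2 (1, t)}
  add_mem' := by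
    rintro p q ⟨h1, h3, h5, h6⟩ ⟨g1, g3, g5, g6⟩
    exact ⟨by simp [h1, g1], fun t => by simp [h3 t, g3 t], fun s => by simp [h5 s, g5 s],
      fun t => by simp [h6 t, g6 t]⟩
  zero_mem' := ⟨by simp, fun t => by simp, fun s => by simp, fun t => by simp⟩
  mul_mem' := by
    rintro p q ⟨h1, h3, h5, h6⟩ ⟨g1, g3, g5, g6⟩
    exact ⟨by simp [h1, g1], fun t => by simp [h3 t, g3 t], fun s => by simp [h5 s, g5 s],
      fun t => by simp [h6 t, g6 t]⟩
  smul_mem' := by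
    rintro c p ⟨h1, h3, h5, h6⟩
    exact ⟨by simp [h1], fun t => by simp [h3 t], fun s => by simp [h5 s],
      fun t => by simp [h6 t]⟩
  star_mem' := by
    rintro p ⟨h1, h3, h5, h6⟩
    exact ⟨by simp [h1], fun t => by simp [h3 t], fun s => by simp [h5 s],
      fun t => by simp [map_star, h6 t]⟩

variable {X Y₁ Y₂ Z : Type*} [NonUnitalCStarAlgebra X] [NonUnitalCStarAlgebra Y₁]
  [NonUnitalCStarAlgebra Y₂] [NonUnitalCStarAlgebra Z]

/-- The canonical concrete realization of the double mapping cone associated to a commuting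
square `ψ₁ ∘ φ₁ = ψ₂ ∘ φ₂`, inside `X × C([0,1],Y₁) × C([0,1],Y₂) × C([0,1]²,Z)`. -/
def dblCone (φ₁ : X →⋆ₙₐ[ℂ] Y₁) (φ₂ : X →⋆ₙₐ[ℂ] Y₂) (ψ₁ : Y₁ →⋆ₙₐ[ℂ] Z) (ψ₂ : Y₂ →⋆ₙₐ[ℂ] Z) :
    NonUnitalStarSubalgebra ℂ (X × C(I, Y₁) × C(I, Y₂) × C(I × I, Z)) where
  carrier := {p | p.2.1 0 = 0 ∧ p.2.2.1 0 = 0 ∧ (∀ t, p.2.2.2 (0, t) = 0) ∧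
    (∀ s, p.2.2.2 (s, 0) = 0) ∧ φ₁ p.1 = p.2.1 1 ∧ φ₂ p.1 = p.2.2.1 1 ∧
    (∀ t, ψ₁ (p.2.1 t) = p.2.2.2 (1, t)) ∧ ∀ s, ψ₂ (p.2.2.1 s) = p.2.2.2 (s, 1)}
  add_mem' := by
    rintro p q ⟨h1, h2, h3, h4, h5, h6, h7, h8⟩ ⟨g1, g2, g3, g4, g5, g6, g7, g8⟩
    exact ⟨by simp [h1, g1], by simp [h2, g2], fun t => by simp [h3 t, g3 t],
      fun s => by simp [h4 s, g4 s], by simp [h5, g5], by simp [h6, g6],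
      fun t => by simp [h7 t, g7 t], fun s => by simp [h8 s, g8 s]⟩
  zero_mem' := ⟨by simp, by simp, fun t => by simp, fun s => by simp, by simp, by simp,
    fun t => by simp, fun s => by simp⟩
  mul_mem' := by
    rintro p q ⟨h1, h2, h3, h4, h5, h6, h7, h8⟩ ⟨g1, g2, g3, g4, g5, g6, g7, g8⟩
    exact ⟨by simp [h1, g1], by simp [h2, g2], fun t => by simp [h3 t, g3 t],
      fun s => by simp [h4 s, g4 s], by simp [h5, g5], by simp [h6, g6],
      fun t => by simp [h7 t, g7 t], fun s => by simp [h8 s, g8 s]⟩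
  smul_mem' := by
    rintro c p ⟨h1, h2, h3, h4, h5, h6, h7, h8⟩
    exact ⟨by simp [h1], by simp [h2], fun t => by simp [h3 t], fun s => by simp [h4 s],
      by simp [h5], by simp [h6], fun t => by simp [h7 t], fun s => by simp [h8 s]⟩
  star_mem' := by
    rintro p ⟨h1, h2, h3, h4, h5, h6, h7, h8⟩
    exact ⟨by simp [h1], by simp [h2], fun t => by simp [h3 t], fun s => by simp [h4 s],
      by simp [map_star, h5], by simp [map_star, h6], fun t => by simp [map_star, h7 t],
      fun s => by simp [map_star, h8 s]⟩

/-- The pullback of two *-homomorphisms with common codomain, as a *-subalgebra of the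
direct sum. -/
def pullbackAlg {B₂ C₁ C₂ : Type*} [NonUnitalCStarAlgebra B₂] [NonUnitalCStarAlgebra C₁]
    [NonUnitalCStarAlgebra C₂] (v : B₂ →⋆ₙₐ[ℂ] C₂) (w : C₁ →⋆ₙₐ[ℂ] C₂) :
    NonUnitalStarSubalgebra ℂ (B₂ × C₁) where
  carrier := {p | v p.1 = w p.2}
  add_mem' := by intro p q hp hq; simp_all [Set.mem_setOf_eq]
  zero_mem' := by simp [Set.mem_setOf_eq]
  mul_mem' := by intro p q hp hq; simp_all [Set.mem_setOf_eq]
  smul_mem' := by intro c p hp; simp_all [Set.mem_setOf_eq]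
  star_mem' := by intro p hp; simp_all [Set.mem_setOf_eq, map_star]

/-- `ι, π` form a short exact sequence. -/
def IsShortExact {A₀ A₁ A₂ : Type*}
    [NonUnitalNonAssocSemiring A₀] [NonUnitalNonAssocSemiring A₁] [NonUnitalNonAssocSemiring A₂]
    [DistribMulAction ℂ A₀] [DistribMulAction ℂ A₁] [DistribMulAction ℂ A₂]
    [Star A₀] [Star A₁] [Star A₂]
    (ι : A₀ →⋆ₙₐ[ℂ] A₁) (π : A₁ →⋆ₙₐ[ℂ] A₂) : Prop :=
  Function.Injective ι ∧ Function.Surjective π ∧ Set.range ι = {b | π b = 0}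

/-- A covariant functor from (non-unital) C*-algebras to abelian groups. -/
structure AbFunctor where
  obj : (A : Type) → [NonUnitalCStarAlgebra A] → Type
  grp : (A : Type) → [NonUnitalCStarAlgebra A] → AddCommGroup (obj A)
  map : {A B : Type} → [NonUnitalCStarAlgebra A] → [NonUnitalCStarAlgebra B] →
    (A →⋆ₙₐ[ℂ] B) → obj A → obj B
  map_add : ∀ {A B : Type} [NonUnitalCStarAlgebra A] [NonUnitalCStarAlgebra B]
    (φ : A →⋆ₙₐ[ℂ] B) (x y : obj A),
      letI := grp A
      letI := grp B
      map φ (x + y) = map φ x + map φ y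
  map_id : ∀ {A : Type} [NonUnitalCStarAlgebra A] (φ : A →⋆ₙₐ[ℂ] A),
    (∀ a, φ a = a) → ∀ x, map φ x = x
  map_comp : ∀ {A B C : Type} [NonUnitalCStarAlgebra A] [NonUnitalCStarAlgebra B]
    [NonUnitalCStarAlgebra C] (φ : A →⋆ₙₐ[ℂ] B) (ψ : B →⋆ₙₐ[ℂ] C) (x : obj A),
      map (ψ.comp φ) x = map ψ (map φ x)

attribute [instance] AbFunctor.grp

/-- The first coordinate projection as a *-homomorphism. -/
def fstHom (A B : Type*) [NonUnitalCStarAlgebra A] [NonUnitalCStarAlgebra B] :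
    (A × B) →⋆ₙₐ[ℂ] A where
  toFun := Prod.fst
  map_smul' _ _ := rfl
  map_zero' := rfl
  map_add' _ _ := rfl
  map_mul' _ _ := rfl
  map_star' _ := rfl

/-- The second coordinate projection as a *-homomorphism. -/
def sndHom (A B : Type*) [NonUnitalCStarAlgebra A] [NonUnitalCStarAlgebra B] :
    (A × B) →⋆ₙₐ[ℂ] B where
  toFun := Prod.snd
  map_smul' _ _ := rfl
  map_zero' := rfl
  map_add' _ _ := rfl
  map_mul' _ _ := rfl
  map_star' _ := rfl

/-- Additivity: `F(A ⊕ B) ≅ F(A) × F(B)` via the coordinate projections. -/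
def AbFunctor.Additive (F : AbFunctor) : Prop :=
  ∀ (A B : Type) [NonUnitalCStarAlgebra A] [NonUnitalCStarAlgebra B],
    Function.Bijective fun x : F.obj (A × B) => (F.map (fstHom A B) x, F.map (sndHom A B) x)

/-- Homotopy invariance. -/
def AbFunctor.HomotopyInvariant (F : AbFunctor) : Prop :=
  ∀ (A B : Type) [NonUnitalCStarAlgebra A] [NonUnitalCStarAlgebra B] (φ ψ : A →⋆ₙₐ[ℂ] B),
    (∃ Φ : A →⋆ₙₐ[ℂ] C(I, B), (∀ a, Φ a 0 = φ a) ∧ (∀ a, Φ a 1 = ψ a)) →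
    ∀ x, F.map φ x = F.map ψ x

/-- Half-exactness. -/
def AbFunctor.HalfExact (F : AbFunctor) : Prop :=
  ∀ (A₀ A₁ A₂ : Type) [NonUnitalCStarAlgebra A₀] [NonUnitalCStarAlgebra A₁]
    [NonUnitalCStarAlgebra A₂] (ι : A₀ →⋆ₙₐ[ℂ] A₁) (π : A₁ →⋆ₙₐ[ℂ] A₂),
    IsShortExact ι π → ∀ y : F.obj A₁, (∃ x, F.map ι x = y) ↔ F.map π y = 0



/-! ### Auxiliary material for Statement 6 -/

section Statement6Aux

/-- The identity *-homomorphism. -/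
def idH (A : Type*) [NonUnitalCStarAlgebra A] : A →⋆ₙₐ[ℂ] A where
  toFun a := a
  map_smul' _ _ := rfl
  map_zero' := rfl
  map_add' _ _ := rfl
  map_mul' _ _ := rfl
  map_star' _ := rfl

/-- The inclusion `A → A × B`, `a ↦ (a, 0)`. -/
def inlH (A B : Type*) [NonUnitalCStarAlgebra A] [NonUnitalCStarAlgebra B] :
    A →⋆ₙₐ[ℂ] A × B where
  toFun a := (a, 0)
  map_smul' c a := by simp [Prod.ext_iff]
  map_zero' := rfl
  map_add' a b := by simp [Prod.ext_iff]
  map_mul' a b := by simp [Prod.ext_iff]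
  map_star' a := by simp [Prod.ext_iff]

/-- The inclusion `B → A × B`, `b ↦ (0, b)`. -/
def inrH (A B : Type*) [NonUnitalCStarAlgebra A] [NonUnitalCStarAlgebra B] :
    B →⋆ₙₐ[ℂ] A × B where
  toFun b := (0, b)
  map_smul' c a := by simp [Prod.ext_iff]
  map_zero' := rfl
  map_add' a b := by simp [Prod.ext_iff]
  map_mul' a b := by simp [Prod.ext_iff]
  map_star' a := by simp [Prod.ext_iff]

theorem IsShortExact.comp_apply_eq_zero {A B C : Type*} [NonUnitalCStarAlgebra A]
    [NonUnitalCStarAlgebra B] [NonUnitalCStarAlgebra C] {ι : A →⋆ₙₐ[ℂ] B} {π : B →⋆ₙₐ[ℂ] C}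
    (h : IsShortExact ι π) (a : A) : π (ι a) = 0 := by
  have : ι a ∈ Set.range ι := ⟨a, rfl⟩
  rw [h.2.2] at this
  exact this

theorem IsShortExact.exists_of_zero {A B C : Type*} [NonUnitalCStarAlgebra A]
    [NonUnitalCStarAlgebra B] [NonUnitalCStarAlgebra C] {ι : A →⋆ₙₐ[ℂ] B} {π : B →⋆ₙₐ[ℂ] C}
    (h : IsShortExact ι π) {b : B} (hb : π b = 0) : ∃ a, ι a = b := by
  have : b ∈ Set.range ι := by rw [h.2.2]; exact hb
  exact this

/-- `F.map` of pointwise-equal homomorphisms agree. -/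
theorem AbFunctor.map_congr (F : AbFunctor) {A B : Type} [NonUnitalCStarAlgebra A]
    [NonUnitalCStarAlgebra B] {φ ψ : A →⋆ₙₐ[ℂ] B} (h : ∀ a, φ a = ψ a) (x : F.obj A) :
    F.map φ x = F.map ψ x := by
  have : φ = ψ := DFunLike.ext _ _ h
  rw [this]

theorem isShortExact_inl_snd (A B : Type*) [NonUnitalCStarAlgebra A] [NonUnitalCStarAlgebra B] :
    IsShortExact (inlH A B) (sndHom A B) := by
  refine ⟨fun a a' h => congrArg Prod.fst h, fun b => ⟨(0, b), rfl⟩, ?_⟩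
  ext p
  constructor
  · rintro ⟨a, rfl⟩; rfl
  · intro h
    exact ⟨p.1, Prod.ext rfl (h : p.2 = 0).symm⟩

/-- A half-exact functor kills pointwise-zero homomorphisms. -/
theorem AbFunctor.map_zero_of (F : AbFunctor) (hHX : F.HalfExact) {A B : Type}
    [NonUnitalCStarAlgebra A] [NonUnitalCStarAlgebra B] (φ : A →⋆ₙₐ[ℂ] B) (hφ : ∀ a, φ a = 0)
    (x : F.obj A) : F.map φ x = 0 := by
  have hθ : ∀ y : F.obj B, F.map (sndHom B B) (F.map (inlH B B) y) = 0 := fun y =>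
    (hHX B (B × B) B (inlH B B) (sndHom B B) (isShortExact_inl_snd B B)
      (F.map (inlH B B) y)).mp ⟨y, rfl⟩
  have hcong : F.map φ x = F.map (((sndHom B B).comp (inlH B B)).comp φ) x :=
    F.map_congr (fun a => by rw [hφ a]; rfl) x
  rw [hcong, F.map_comp, F.map_comp]
  exact hθ _

/-- In an additive half-exact functor, every element of `F(A ⊕ B)` decomposes. -/
theorem AbFunctor.decompose (F : AbFunctor) (hAdd : F.Additive) (hHX : F.HalfExact)
    {A B : Type} [NonUnitalCStarAlgebra A] [NonUnitalCStarAlgebra B] (g : F.obj (A × B)) :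
    g = F.map (inlH A B) (F.map (fstHom A B) g) + F.map (inrH A B) (F.map (sndHom A B) g) := by
  have t1 : F.map (fstHom A B) (F.map (inlH A B) (F.map (fstHom A B) g))
      = F.map (fstHom A B) g := by
    rw [← F.map_comp]; exact F.map_id ((fstHom A B).comp (inlH A B)) (fun _ => rfl) _
  have t2 : F.map (fstHom A B) (F.map (inrH A B) (F.map (sndHom A B) g)) = 0 := by
    rw [← F.map_comp]; exact F.map_zero_of hHX ((fstHom A B).comp (inrH A B)) (fun _ => rfl) _
  have t3 : F.map (sndHom A B) (F.map (inlH A B) (F.map (fstHom A B) g)) = 0 := by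
    rw [← F.map_comp]; exact F.map_zero_of hHX ((sndHom A B).comp (inlH A B)) (fun _ => rfl) _
  have t4 : F.map (sndHom A B) (F.map (inrH A B) (F.map (sndHom A B) g))
      = F.map (sndHom A B) g := by
    rw [← F.map_comp]; exact F.map_id ((sndHom A B).comp (inrH A B)) (fun _ => rfl) _
  have e1 : F.map (fstHom A B)
      (F.map (inlH A B) (F.map (fstHom A B) g) + F.map (inrH A B) (F.map (sndHom A B) g))
      = F.map (fstHom A B) g := by rw [F.map_add, t1, t2, add_zero]
  have e2 : F.map (sndHom A B)
      (F.map (inlH A B) (F.map (fstHom A B) g) + F.map (inrH A B) (F.map (sndHom A B) g))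
      = F.map (sndHom A B) g := by rw [F.map_add, t3, t4, zero_add]
  exact ((hAdd A B).1 (Prod.ext e1 e2)).symm

variable {A₀ A₁ A₂ B₀ B₁ B₂ C₀ C₁ C₂ : Type*}
  [NonUnitalCStarAlgebra A₀] [NonUnitalCStarAlgebra A₁] [NonUnitalCStarAlgebra A₂]
  [NonUnitalCStarAlgebra B₀] [NonUnitalCStarAlgebra B₁] [NonUnitalCStarAlgebra B₂]
  [NonUnitalCStarAlgebra C₀] [NonUnitalCStarAlgebra C₁] [NonUnitalCStarAlgebra C₂]

/-- The corner algebra of a 3×3 diagram: triples `(b, c, a)` with `v₁ b = ιC c` and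
`πB b = u₂ a`. -/
def corner (v₁ : B₁ →⋆ₙₐ[ℂ] C₁) (ιC : C₀ →⋆ₙₐ[ℂ] C₁) (πB : B₁ →⋆ₙₐ[ℂ] B₂)
    (u₂ : A₂ →⋆ₙₐ[ℂ] B₂) : NonUnitalStarSubalgebra ℂ (B₁ × C₀ × A₂) where
  carrier := {p | v₁ p.1 = ιC p.2.1 ∧ πB p.1 = u₂ p.2.2}
  add_mem' := by rintro p q ⟨hp1, hp2⟩ ⟨hq1, hq2⟩
                 exact ⟨by simp [hp1, hq1], by simp [hp2, hq2]⟩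
  zero_mem' := ⟨by simp, by simp⟩
  mul_mem' := by rintro p q ⟨hp1, hp2⟩ ⟨hq1, hq2⟩
                 exact ⟨by simp [hp1, hq1], by simp [hp2, hq2]⟩
  smul_mem' := by rintro c p ⟨h1, h2⟩; exact ⟨by simp [h1], by simp [h2]⟩
  star_mem' := by rintro p ⟨h1, h2⟩; exact ⟨by simp [map_star, h1], by simp [map_star, h2]⟩

instance corner.isClosed (v₁ : B₁ →⋆ₙₐ[ℂ] C₁) (ιC : C₀ →⋆ₙₐ[ℂ] C₁) (πB : B₁ →⋆ₙₐ[ℂ] B₂)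
    (u₂ : A₂ →⋆ₙₐ[ℂ] B₂) : IsClosed ((corner v₁ ιC πB u₂ : Set (B₁ × C₀ × A₂))) := by
  have h : (corner v₁ ιC πB u₂ : Set (B₁ × C₀ × A₂))
      = {p : B₁ × C₀ × A₂ | v₁ p.1 = ιC p.2.1} ∩ {p : B₁ × C₀ × A₂ | πB p.1 = u₂ p.2.2} := rfl
  rw [h]
  exact (isClosed_eq ((map_continuous v₁).comp continuous_fst)
      ((map_continuous ιC).comp (continuous_fst.comp continuous_snd))).inter
    (isClosed_eq ((map_continuous πB).comp continuous_fst)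
      ((map_continuous u₂).comp (continuous_snd.comp continuous_snd)))

variable (v₁ : B₁ →⋆ₙₐ[ℂ] C₁) (ιC : C₀ →⋆ₙₐ[ℂ] C₁) (πB : B₁ →⋆ₙₐ[ℂ] B₂) (u₂ : A₂ →⋆ₙₐ[ℂ] B₂)

/-- First projection of the corner algebra. -/
def cornerB : ↥(corner v₁ ιC πB u₂) →⋆ₙₐ[ℂ] B₁ where
  toFun p := (p : B₁ × C₀ × A₂).1
  map_smul' _ _ := rfl
  map_zero' := rfl
  map_add' _ _ := rfl
  map_mul' _ _ := rfl
  map_star' _ := rfl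

/-- Second projection of the corner algebra. -/
def cornerC : ↥(corner v₁ ιC πB u₂) →⋆ₙₐ[ℂ] C₀ where
  toFun p := (p : B₁ × C₀ × A₂).2.1
  map_smul' _ _ := rfl
  map_zero' := rfl
  map_add' _ _ := rfl
  map_mul' _ _ := rfl
  map_star' _ := rfl

/-- Third projection of the corner algebra. -/
def cornerA : ↥(corner v₁ ιC πB u₂) →⋆ₙₐ[ℂ] A₂ where
  toFun p := (p : B₁ × C₀ × A₂).2.2
  map_smul' _ _ := rfl
  map_zero' := rfl
  map_add' _ _ := rfl
  map_mul' _ _ := rfl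
  map_star' _ := rfl

/-- The quotient map of the corner algebra onto `A₂ × C₀`. -/
def cornerRho : ↥(corner v₁ ιC πB u₂) →⋆ₙₐ[ℂ] A₂ × C₀ where
  toFun p := ((p : B₁ × C₀ × A₂).2.2, (p : B₁ × C₀ × A₂).2.1)
  map_smul' _ _ := rfl
  map_zero' := rfl
  map_add' _ _ := rfl
  map_mul' _ _ := rfl
  map_star' _ := rfl

/-- The inclusion `A₀ → corner`. -/
def cornerKappa (ιB : B₀ →⋆ₙₐ[ℂ] B₁) (u₀ : A₀ →⋆ₙₐ[ℂ] B₀)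
    (hk : ∀ a, v₁ (ιB (u₀ a)) = ιC 0 ∧ πB (ιB (u₀ a)) = u₂ 0) :
    A₀ →⋆ₙₐ[ℂ] ↥(corner v₁ ιC πB u₂) where
  toFun a := ⟨(ιB (u₀ a), 0, 0), hk a⟩
  map_smul' c a := Subtype.ext (by simp [Prod.ext_iff])
  map_zero' := Subtype.ext (by simp [Prod.ext_iff])
  map_add' a b := Subtype.ext (by simp [Prod.ext_iff])
  map_mul' a b := Subtype.ext (by simp [Prod.ext_iff])
  map_star' a := Subtype.ext (by simp [Prod.ext_iff, map_star])

/-- The map `A₁ → corner`. -/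
def cornerAlpha (u₁ : A₁ →⋆ₙₐ[ℂ] B₁) (πA : A₁ →⋆ₙₐ[ℂ] A₂)
    (hk : ∀ a, v₁ (u₁ a) = ιC 0 ∧ πB (u₁ a) = u₂ (πA a)) :
    A₁ →⋆ₙₐ[ℂ] ↥(corner v₁ ιC πB u₂) where
  toFun a := ⟨(u₁ a, 0, πA a), hk a⟩
  map_smul' c a := Subtype.ext (by simp [Prod.ext_iff])
  map_zero' := Subtype.ext (by simp [Prod.ext_iff])
  map_add' a b := Subtype.ext (by simp [Prod.ext_iff])
  map_mul' a b := Subtype.ext (by simp [Prod.ext_iff])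
  map_star' a := Subtype.ext (by simp [Prod.ext_iff, map_star])

/-- The map `B₀ → corner`. -/
def cornerGamma (ιB : B₀ →⋆ₙₐ[ℂ] B₁) (v₀ : B₀ →⋆ₙₐ[ℂ] C₀)
    (hk : ∀ b, v₁ (ιB b) = ιC (v₀ b) ∧ πB (ιB b) = u₂ 0) :
    B₀ →⋆ₙₐ[ℂ] ↥(corner v₁ ιC πB u₂) where
  toFun b := ⟨(ιB b, v₀ b, 0), hk b⟩
  map_smul' c a := Subtype.ext (by simp [Prod.ext_iff])
  map_zero' := Subtype.ext (by simp [Prod.ext_iff])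
  map_add' a b := Subtype.ext (by simp [Prod.ext_iff])
  map_mul' a b := Subtype.ext (by simp [Prod.ext_iff])
  map_star' a := Subtype.ext (by simp [Prod.ext_iff, map_star])

end Statement6Aux

section Statement6Main

/-- The generic half of the anticommutativity statement. -/
theorem anticomm_aux (F G : AbFunctor) (hAddG : G.Additive) (hHXG : G.HalfExact)
    (d : ∀ {A B C : Type} [NonUnitalCStarAlgebra A] [NonUnitalCStarAlgebra B]
      [NonUnitalCStarAlgebra C] (ι : A →⋆ₙₐ[ℂ] B) (π : B →⋆ₙₐ[ℂ] C),
      IsShortExact ι π → F.obj C → G.obj A)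
    (d' : ∀ {A B C : Type} [NonUnitalCStarAlgebra A] [NonUnitalCStarAlgebra B]
      [NonUnitalCStarAlgebra C] (ι : A →⋆ₙₐ[ℂ] B) (π : B →⋆ₙₐ[ℂ] C),
      IsShortExact ι π → G.obj C → F.obj A)
    (hd'add : ∀ {A B C : Type} [NonUnitalCStarAlgebra A] [NonUnitalCStarAlgebra B]
      [NonUnitalCStarAlgebra C] (ι : A →⋆ₙₐ[ℂ] B) (π : B →⋆ₙₐ[ℂ] C) (h : IsShortExact ι π)
      (z w : G.obj C), d' ι π h (z + w) = d' ι π h z + d' ι π h w)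
    (hexd' : ∀ {A B C : Type} [NonUnitalCStarAlgebra A] [NonUnitalCStarAlgebra B]
      [NonUnitalCStarAlgebra C] (ι : A →⋆ₙₐ[ℂ] B) (π : B →⋆ₙₐ[ℂ] C) (h : IsShortExact ι π)
      (z : G.obj C), (∃ y, G.map π y = z) ↔ d' ι π h z = 0)
    (hnatd : ∀ {A B C A' B' C' : Type} [NonUnitalCStarAlgebra A] [NonUnitalCStarAlgebra B]
      [NonUnitalCStarAlgebra C] [NonUnitalCStarAlgebra A'] [NonUnitalCStarAlgebra B']
      [NonUnitalCStarAlgebra C'] (ι : A →⋆ₙₐ[ℂ] B) (π : B →⋆ₙₐ[ℂ] C) (h : IsShortExact ι π)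
      (ι' : A' →⋆ₙₐ[ℂ] B') (π' : B' →⋆ₙₐ[ℂ] C') (h' : IsShortExact ι' π')
      (φ₀ : A →⋆ₙₐ[ℂ] A') (φ₁ : B →⋆ₙₐ[ℂ] B') (φ₂ : C →⋆ₙₐ[ℂ] C'),
      (∀ x, φ₁ (ι x) = ι' (φ₀ x)) → (∀ y, φ₂ (π y) = π' (φ₁ y)) →
      ∀ z, d ι' π' h' (F.map φ₂ z) = G.map φ₀ (d ι π h z))
    (hnatd' : ∀ {A B C A' B' C' : Type} [NonUnitalCStarAlgebra A] [NonUnitalCStarAlgebra B]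
      [NonUnitalCStarAlgebra C] [NonUnitalCStarAlgebra A'] [NonUnitalCStarAlgebra B']
      [NonUnitalCStarAlgebra C'] (ι : A →⋆ₙₐ[ℂ] B) (π : B →⋆ₙₐ[ℂ] C) (h : IsShortExact ι π)
      (ι' : A' →⋆ₙₐ[ℂ] B') (π' : B' →⋆ₙₐ[ℂ] C') (h' : IsShortExact ι' π')
      (φ₀ : A →⋆ₙₐ[ℂ] A') (φ₁ : B →⋆ₙₐ[ℂ] B') (φ₂ : C →⋆ₙₐ[ℂ] C'),
      (∀ x, φ₁ (ι x) = ι' (φ₀ x)) → (∀ y, φ₂ (π y) = π' (φ₁ y)) →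
      ∀ z, d' ι' π' h' (G.map φ₂ z) = F.map φ₀ (d' ι π h z))
    {A₀ A₁ A₂ B₀ B₁ B₂ C₀ C₁ C₂ : Type}
    [NonUnitalCStarAlgebra A₀] [NonUnitalCStarAlgebra A₁] [NonUnitalCStarAlgebra A₂]
    [NonUnitalCStarAlgebra B₀] [NonUnitalCStarAlgebra B₁] [NonUnitalCStarAlgebra B₂]
    [NonUnitalCStarAlgebra C₀] [NonUnitalCStarAlgebra C₁] [NonUnitalCStarAlgebra C₂]
    (ιA : A₀ →⋆ₙₐ[ℂ] A₁) (πA : A₁ →⋆ₙₐ[ℂ] A₂) (hA : IsShortExact ιA πA)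
    (ιB : B₀ →⋆ₙₐ[ℂ] B₁) (πB : B₁ →⋆ₙₐ[ℂ] B₂) (hB : IsShortExact ιB πB)
    (ιC : C₀ →⋆ₙₐ[ℂ] C₁) (πC : C₁ →⋆ₙₐ[ℂ] C₂) (hC : IsShortExact ιC πC)
    (u₀ : A₀ →⋆ₙₐ[ℂ] B₀) (v₀ : B₀ →⋆ₙₐ[ℂ] C₀) (h₀ : IsShortExact u₀ v₀)
    (u₁ : A₁ →⋆ₙₐ[ℂ] B₁) (v₁ : B₁ →⋆ₙₐ[ℂ] C₁) (h₁ : IsShortExact u₁ v₁)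
    (u₂ : A₂ →⋆ₙₐ[ℂ] B₂) (v₂ : B₂ →⋆ₙₐ[ℂ] C₂) (h₂ : IsShortExact u₂ v₂)
    (hsq₁ : ∀ p, u₁ (ιA p) = ιB (u₀ p)) (hsq₂ : ∀ p, u₂ (πA p) = πB (u₁ p))
    (hsq₃ : ∀ q, v₁ (ιB q) = ιC (v₀ q)) (hsq₄ : ∀ q, v₂ (πB q) = πC (v₁ q)) :
    ∀ z : F.obj C₂, d' ιA πA hA (d u₂ v₂ h₂ z) = - d' u₀ v₀ h₀ (d ιC πC hC z) := by
  intro z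
  -- the maps out of / into the corner algebra
  set pB := cornerB v₁ ιC πB u₂ with hpB
  set pC := cornerC v₁ ιC πB u₂ with hpC
  set pA := cornerA v₁ ιC πB u₂ with hpA
  set ρ := cornerRho v₁ ιC πB u₂ with hρ
  set w := v₂.comp πB with hw
  have hκmem : ∀ a, v₁ (ιB (u₀ a)) = ιC 0 ∧ πB (ιB (u₀ a)) = u₂ 0 := fun a =>
    ⟨by rw [hsq₃, h₀.comp_apply_eq_zero], by rw [hB.comp_apply_eq_zero]; simp⟩
  set κ := cornerKappa v₁ ιC πB u₂ ιB u₀ hκmem with hκ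
  have hαmem : ∀ a, v₁ (u₁ a) = ιC 0 ∧ πB (u₁ a) = u₂ (πA a) := fun a =>
    ⟨by rw [h₁.comp_apply_eq_zero]; simp, (hsq₂ a).symm⟩
  set αh := cornerAlpha v₁ ιC πB u₂ u₁ πA hαmem with hαh
  have hγmem : ∀ b, v₁ (ιB b) = ιC (v₀ b) ∧ πB (ιB b) = u₂ 0 := fun b =>
    ⟨hsq₃ b, by rw [hB.comp_apply_eq_zero]; simp⟩
  set γh := cornerGamma v₁ ιC πB u₂ ιB v₀ hγmem with hγh
  -- the short exact sequence corner → B₁ → C₂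
  have hs₃ : IsShortExact pB w := by
    refine ⟨?_, ?_, ?_⟩
    · intro p q hpq
      have h1 : (p : B₁ × C₀ × A₂).1 = (q : B₁ × C₀ × A₂).1 := hpq
      have h2 : (p : B₁ × C₀ × A₂).2.1 = (q : B₁ × C₀ × A₂).2.1 :=
        hC.1 (by rw [← p.2.1, ← q.2.1, h1])
      have h3 : (p : B₁ × C₀ × A₂).2.2 = (q : B₁ × C₀ × A₂).2.2 :=
        h₂.1 (by rw [← p.2.2, ← q.2.2, h1])
      exact Subtype.ext (Prod.ext h1 (Prod.ext h2 h3))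
    · intro c
      obtain ⟨b₂, hb₂⟩ := h₂.2.1 c
      obtain ⟨b₁, hb₁⟩ := hB.2.1 b₂
      exact ⟨b₁, by simp only [hw, NonUnitalStarAlgHom.comp_apply, hb₁, hb₂]⟩
    · ext b
      constructor
      · rintro ⟨p, rfl⟩
        show v₂ (πB (p : B₁ × C₀ × A₂).1) = 0
        rw [p.2.2]
        exact h₂.comp_apply_eq_zero _
      · intro hb
        have hb' : v₂ (πB b) = 0 := hb
        obtain ⟨a, ha⟩ := h₂.exists_of_zero hb'
        have hπC : πC (v₁ b) = 0 := by rw [← hsq₄]; exact hb'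
        obtain ⟨c, hcc⟩ := hC.exists_of_zero hπC
        exact ⟨⟨(b, c, a), ⟨hcc.symm, ha.symm⟩⟩, rfl⟩
  -- the short exact sequence A₀ → corner → A₂ × C₀
  have hs₅ : IsShortExact κ ρ := by
    refine ⟨?_, ?_, ?_⟩
    · intro a a' h
      exact h₀.1 (hB.1 (congrArg Prod.fst (Subtype.ext_iff.mp h)))
    · rintro ⟨a₂, c₀⟩
      obtain ⟨b, hb⟩ := h₁.2.1 (ιC c₀)
      have hvb : v₂ (πB b) = 0 := by rw [hsq₄, hb]; exact hC.comp_apply_eq_zero c₀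
      obtain ⟨a', ha'⟩ := h₂.exists_of_zero hvb
      obtain ⟨x, hx⟩ := hA.2.1 (a₂ - a')
      refine ⟨⟨(b + u₁ x, c₀, a₂), ⟨?_, ?_⟩⟩, rfl⟩
      · rw [map_add, h₁.comp_apply_eq_zero, add_zero, hb]
      · rw [map_add, ← hsq₂, hx, ← ha', ← map_add, add_sub_cancel]
    · ext p
      constructor
      · rintro ⟨a, rfl⟩
        show ρ (κ a) = 0
        rfl
      · intro hp
        have hp' : ((p : B₁ × C₀ × A₂).2.2, (p : B₁ × C₀ × A₂).2.1) = (0, 0) := hp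
        have h22 : (p : B₁ × C₀ × A₂).2.2 = 0 := congrArg Prod.fst hp'
        have h21 : (p : B₁ × C₀ × A₂).2.1 = 0 := congrArg Prod.snd hp'
        have hv : v₁ (p : B₁ × C₀ × A₂).1 = 0 := by rw [p.2.1, h21]; simp
        obtain ⟨a₁, ha₁⟩ := h₁.exists_of_zero hv
        have hu : u₂ (πA a₁) = u₂ 0 := by
          rw [hsq₂, ha₁, p.2.2, h22]
        obtain ⟨a₀, ha₀⟩ := hA.exists_of_zero (h₂.1 hu)
        refine ⟨a₀, Subtype.ext (Prod.ext ?_ (Prod.ext h21.symm h22.symm))⟩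
        show ιB (u₀ a₀) = (p : B₁ × C₀ × A₂).1
        rw [← hsq₁, ha₀, ha₁]
  -- transport the boundary of z into the corner algebra
  set xh := d pB w hs₃ z with hxh
  have hx2 : d u₂ v₂ h₂ z = G.map pA xh := by
    have hnn := hnatd pB w hs₃ u₂ v₂ h₂ pA πB (idH C₂)
      (fun p => p.2.2) (fun b => rfl) z
    rwa [F.map_id (idH C₂) (fun _ => rfl)] at hnn
  have hcC : d ιC πC hC z = G.map pC xh := by
    have hnn := hnatd pB w hs₃ ιC πC hC pC v₁ (idH C₂)
      (fun p => p.2.1) (fun b => hsq₄ b) z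
    rwa [F.map_id (idH C₂) (fun _ => rfl)] at hnn
  -- decompose G.map ρ xh
  have ha' : G.map (fstHom A₂ C₀) (G.map ρ xh) = G.map pA xh := by
    rw [← G.map_comp]; exact G.map_congr (fun p => rfl) xh
  have hc' : G.map (sndHom A₂ C₀) (G.map ρ xh) = G.map pC xh := by
    rw [← G.map_comp]; exact G.map_congr (fun p => rfl) xh
  have hdec : G.map ρ xh
      = G.map (inlH A₂ C₀) (G.map pA xh) + G.map (inrH A₂ C₀) (G.map pC xh) := by
    have := G.decompose hAddG hHXG (G.map ρ xh)
    rwa [ha', hc'] at this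
  -- the boundary of G.map ρ xh vanishes
  have h0 : d' κ ρ hs₅ (G.map ρ xh) = 0 := (hexd' κ ρ hs₅ (G.map ρ xh)).mp ⟨xh, rfl⟩
  rw [hdec, hd'add] at h0
  -- identify the two summands
  have hnA : d' κ ρ hs₅ (G.map (inlH A₂ C₀) (G.map pA xh)) = d' ιA πA hA (G.map pA xh) := by
    have hnn := hnatd' ιA πA hA κ ρ hs₅ (idH A₀) αh (inlH A₂ C₀)
      (fun x => Subtype.ext (Prod.ext (hsq₁ x)
        (Prod.ext rfl (hA.comp_apply_eq_zero x))))
      (fun y => rfl) (G.map pA xh)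
    rwa [F.map_id (idH A₀) (fun _ => rfl)] at hnn
  have hn0 : d' κ ρ hs₅ (G.map (inrH A₂ C₀) (G.map pC xh)) = d' u₀ v₀ h₀ (G.map pC xh) := by
    have hnn := hnatd' u₀ v₀ h₀ κ ρ hs₅ (idH A₀) γh (inrH A₂ C₀)
      (fun x => Subtype.ext (Prod.ext rfl
        (Prod.ext (h₀.comp_apply_eq_zero x) rfl)))
      (fun y => rfl) (G.map pC xh)
    rwa [F.map_id (idH A₀) (fun _ => rfl)] at hnn
  rw [hnA, hn0] at h0
  rw [hx2, hcC]
  exact eq_neg_of_add_eq_zero_left h0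

end Statement6Main

/-- Anticommutativity of the boundary maps around a 3×3 diagram. -/
theorem statement6 (F₀ F₁ : AbFunctor)
    (hAdd₀ : F₀.Additive) (hHtpy₀ : F₀.HomotopyInvariant) (hHX₀ : F₀.HalfExact)
    (hAdd₁ : F₁.Additive) (hHtpy₁ : F₁.HomotopyInvariant) (hHX₁ : F₁.HalfExact)
    -- boundary maps assigned to every short exact sequence
    (d₀ : ∀ {A B C : Type} [NonUnitalCStarAlgebra A] [NonUnitalCStarAlgebra B]
      [NonUnitalCStarAlgebra C] (ι : A →⋆ₙₐ[ℂ] B) (π : B →⋆ₙₐ[ℂ] C),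
      IsShortExact ι π → F₀.obj C → F₁.obj A)
    (d₁ : ∀ {A B C : Type} [NonUnitalCStarAlgebra A] [NonUnitalCStarAlgebra B]
      [NonUnitalCStarAlgebra C] (ι : A →⋆ₙₐ[ℂ] B) (π : B →⋆ₙₐ[ℂ] C),
      IsShortExact ι π → F₁.obj C → F₀.obj A)
    -- the boundary maps are additive
    (hd₀add : ∀ {A B C : Type} [NonUnitalCStarAlgebra A] [NonUnitalCStarAlgebra B]
      [NonUnitalCStarAlgebra C] (ι : A →⋆ₙₐ[ℂ] B) (π : B →⋆ₙₐ[ℂ] C) (h : IsShortExact ι π)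
      (z w : F₀.obj C), d₀ ι π h (z + w) = d₀ ι π h z + d₀ ι π h w)
    (hd₁add : ∀ {A B C : Type} [NonUnitalCStarAlgebra A] [NonUnitalCStarAlgebra B]
      [NonUnitalCStarAlgebra C] (ι : A →⋆ₙₐ[ℂ] B) (π : B →⋆ₙₐ[ℂ] C) (h : IsShortExact ι π)
      (z w : F₁.obj C), d₁ ι π h (z + w) = d₁ ι π h z + d₁ ι π h w)
    -- (a) the cyclic six-term sequence is exact at every spot
    (hex₁ : ∀ {A B C : Type} [NonUnitalCStarAlgebra A] [NonUnitalCStarAlgebra B]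
      [NonUnitalCStarAlgebra C] (ι : A →⋆ₙₐ[ℂ] B) (π : B →⋆ₙₐ[ℂ] C) (h : IsShortExact ι π)
      (y : F₀.obj B), (∃ x, F₀.map ι x = y) ↔ F₀.map π y = 0)
    (hex₂ : ∀ {A B C : Type} [NonUnitalCStarAlgebra A] [NonUnitalCStarAlgebra B]
      [NonUnitalCStarAlgebra C] (ι : A →⋆ₙₐ[ℂ] B) (π : B →⋆ₙₐ[ℂ] C) (h : IsShortExact ι π)
      (z : F₀.obj C), (∃ y, F₀.map π y = z) ↔ d₀ ι π h z = 0)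
    (hex₃ : ∀ {A B C : Type} [NonUnitalCStarAlgebra A] [NonUnitalCStarAlgebra B]
      [NonUnitalCStarAlgebra C] (ι : A →⋆ₙₐ[ℂ] B) (π : B →⋆ₙₐ[ℂ] C) (h : IsShortExact ι π)
      (x : F₁.obj A), (∃ z, d₀ ι π h z = x) ↔ F₁.map ι x = 0)
    (hex₄ : ∀ {A B C : Type} [NonUnitalCStarAlgebra A] [NonUnitalCStarAlgebra B]
      [NonUnitalCStarAlgebra C] (ι : A →⋆ₙₐ[ℂ] B) (π : B →⋆ₙₐ[ℂ] C) (h : IsShortExact ι π)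
      (y : F₁.obj B), (∃ x, F₁.map ι x = y) ↔ F₁.map π y = 0)
    (hex₅ : ∀ {A B C : Type} [NonUnitalCStarAlgebra A] [NonUnitalCStarAlgebra B]
      [NonUnitalCStarAlgebra C] (ι : A →⋆ₙₐ[ℂ] B) (π : B →⋆ₙₐ[ℂ] C) (h : IsShortExact ι π)
      (z : F₁.obj C), (∃ y, F₁.map π y = z) ↔ d₁ ι π h z = 0)
    (hex₆ : ∀ {A B C : Type} [NonUnitalCStarAlgebra A] [NonUnitalCStarAlgebra B]
      [NonUnitalCStarAlgebra C] (ι : A →⋆ₙₐ[ℂ] B) (π : B →⋆ₙₐ[ℂ] C) (h : IsShortExact ι π)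
      (x : F₀.obj A), (∃ z, d₁ ι π h z = x) ↔ F₀.map ι x = 0)
    -- (b) naturality of the boundary maps
    (hnat₀ : ∀ {A B C A' B' C' : Type} [NonUnitalCStarAlgebra A] [NonUnitalCStarAlgebra B]
      [NonUnitalCStarAlgebra C] [NonUnitalCStarAlgebra A'] [NonUnitalCStarAlgebra B']
      [NonUnitalCStarAlgebra C'] (ι : A →⋆ₙₐ[ℂ] B) (π : B →⋆ₙₐ[ℂ] C) (h : IsShortExact ι π)
      (ι' : A' →⋆ₙₐ[ℂ] B') (π' : B' →⋆ₙₐ[ℂ] C') (h' : IsShortExact ι' π')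
      (φ₀ : A →⋆ₙₐ[ℂ] A') (φ₁ : B →⋆ₙₐ[ℂ] B') (φ₂ : C →⋆ₙₐ[ℂ] C'),
      (∀ x, φ₁ (ι x) = ι' (φ₀ x)) → (∀ y, φ₂ (π y) = π' (φ₁ y)) →
      ∀ z, d₀ ι' π' h' (F₀.map φ₂ z) = F₁.map φ₀ (d₀ ι π h z))
    (hnat₁ : ∀ {A B C A' B' C' : Type} [NonUnitalCStarAlgebra A] [NonUnitalCStarAlgebra B]
      [NonUnitalCStarAlgebra C] [NonUnitalCStarAlgebra A'] [NonUnitalCStarAlgebra B']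
      [NonUnitalCStarAlgebra C'] (ι : A →⋆ₙₐ[ℂ] B) (π : B →⋆ₙₐ[ℂ] C) (h : IsShortExact ι π)
      (ι' : A' →⋆ₙₐ[ℂ] B') (π' : B' →⋆ₙₐ[ℂ] C') (h' : IsShortExact ι' π')
      (φ₀ : A →⋆ₙₐ[ℂ] A') (φ₁ : B →⋆ₙₐ[ℂ] B') (φ₂ : C →⋆ₙₐ[ℂ] C'),
      (∀ x, φ₁ (ι x) = ι' (φ₀ x)) → (∀ y, φ₂ (π y) = π' (φ₁ y)) →
      ∀ z, d₁ ι' π' h' (F₁.map φ₂ z) = F₀.map φ₀ (d₁ ι π h z))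
    -- the 3×3 diagram
    {A₀ A₁ A₂ B₀ B₁ B₂ C₀ C₁ C₂ : Type}
    [NonUnitalCStarAlgebra A₀] [NonUnitalCStarAlgebra A₁] [NonUnitalCStarAlgebra A₂]
    [NonUnitalCStarAlgebra B₀] [NonUnitalCStarAlgebra B₁] [NonUnitalCStarAlgebra B₂]
    [NonUnitalCStarAlgebra C₀] [NonUnitalCStarAlgebra C₁] [NonUnitalCStarAlgebra C₂]
    (ιA : A₀ →⋆ₙₐ[ℂ] A₁) (πA : A₁ →⋆ₙₐ[ℂ] A₂) (hA : IsShortExact ιA πA)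
    (ιB : B₀ →⋆ₙₐ[ℂ] B₁) (πB : B₁ →⋆ₙₐ[ℂ] B₂) (hB : IsShortExact ιB πB)
    (ιC : C₀ →⋆ₙₐ[ℂ] C₁) (πC : C₁ →⋆ₙₐ[ℂ] C₂) (hC : IsShortExact ιC πC)
    (u₀ : A₀ →⋆ₙₐ[ℂ] B₀) (v₀ : B₀ →⋆ₙₐ[ℂ] C₀) (h₀ : IsShortExact u₀ v₀)
    (u₁ : A₁ →⋆ₙₐ[ℂ] B₁) (v₁ : B₁ →⋆ₙₐ[ℂ] C₁) (h₁ : IsShortExact u₁ v₁)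
    (u₂ : A₂ →⋆ₙₐ[ℂ] B₂) (v₂ : B₂ →⋆ₙₐ[ℂ] C₂) (h₂ : IsShortExact u₂ v₂)
    (hsq₁ : ∀ p, u₁ (ιA p) = ιB (u₀ p)) (hsq₂ : ∀ p, u₂ (πA p) = πB (u₁ p))
    (hsq₃ : ∀ q, v₁ (ιB q) = ιC (v₀ q)) (hsq₄ : ∀ q, v₂ (πB q) = πC (v₁ q)) :
    -- the two corner squares anticommute
    (∀ z : F₀.obj C₂, d₁ ιA πA hA (d₀ u₂ v₂ h₂ z) = - d₁ u₀ v₀ h₀ (d₀ ιC πC hC z)) ∧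
    ∀ z : F₁.obj C₂, d₀ ιA πA hA (d₁ u₂ v₂ h₂ z) = - d₀ u₀ v₀ h₀ (d₁ ιC πC hC z) := by
  constructor
  · exact anticomm_aux F₀ F₁ hAdd₁ hHX₁ @d₀ @d₁ @hd₁add @hex₅ @hnat₀ @hnat₁
      ιA πA hA ιB πB hB ιC πC hC u₀ v₀ h₀ u₁ v₁ h₁ u₂ v₂ h₂ hsq₁ hsq₂ hsq₃ hsq₄
  · exact anticomm_aux F₁ F₀ hAdd₀ hHX₀ @d₁ @d₀ @hd₀add @hex₂ @hnat₁ @hnat₀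
      ιA πA hA ιB πB hB ιC πC hC u₀ v₀ h₀ u₁ v₁ h₁ u₂ v₂ h₂ hsq₁ hsq₂ hsq₃ hsq₄

end CStarPaper
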